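/- Let M = ⟨a, b, c ∣ a²b = ba², b²a = ab², a²c = ca², b²c = cb², a²b² = c²⟩⁺ (the positive braid monoid of the torus on two strands). For every g ∈ M there exist unique natural numbers k, l and a unique element w of the universal Coxeter group W = ⟨a,b,c ∣ a²=b²=c²=1⟩ such that g = a^{2k} b^{2l} [w], where [w] denotes the image in M of the unique reduced positive word representing w. -/

import Mathlib

/-- Relations of the presentation `⟨a,b,c ∣ a²b=ba², b²a=ab², a²c=ca², b²c=cb², a²b²=c²⟩`
of the braid group `B₂(Σ_{1,0})`, as elements of the free group on `a = 0`, `b = 1`, `c = 2`. -/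
def grels : Set (FreeGroup (Fin 3)) :=
  { FreeGroup.of 0 ^ 2 * FreeGroup.of 1 * (FreeGroup.of 1 * FreeGroup.of 0 ^ 2)⁻¹,
    FreeGroup.of 1 ^ 2 * FreeGroup.of 0 * (FreeGroup.of 0 * FreeGroup.of 1 ^ 2)⁻¹,
    FreeGroup.of 0 ^ 2 * FreeGroup.of 2 * (FreeGroup.of 2 * FreeGroup.of 0 ^ 2)⁻¹,
    FreeGroup.of 1 ^ 2 * FreeGroup.of 2 * (FreeGroup.of 2 * FreeGroup.of 1 ^ 2)⁻¹,
    FreeGroup.of 0 ^ 2 * FreeGroup.of 1 ^ 2 * (FreeGroup.of 2 ^ 2)⁻¹ }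

/-- Relations `a² = b² = c² = 1` of the universal Coxeter group `W(a,b,c)`. -/
def wrels : Set (FreeGroup (Fin 3)) :=
  { FreeGroup.of 0 ^ 2, FreeGroup.of 1 ^ 2, FreeGroup.of 2 ^ 2 }

/-- The braid group `B₂(Σ_{1,0})` via the presentation above. -/
abbrev G := PresentedGroup grels

/-- The universal Coxeter group `W(a,b,c) = ℤ/2 * ℤ/2 * ℤ/2`. -/
abbrev W := PresentedGroup wrels

def ga : G := PresentedGroup.of 0
def gb : G := PresentedGroup.of 1
def gc : G := PresentedGroup.of 2
def wa : W := PresentedGroup.of 0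
def wb : W := PresentedGroup.of 1
def wc : W := PresentedGroup.of 2
/-- The defining relations of the positive monoid presentation
`⟨a,b,c ∣ a²b=ba², b²a=ab², a²c=ca², b²c=cb², a²b²=c²⟩⁺`, on the free monoid
on `a = 0`, `b = 1`, `c = 2`. -/
inductive mrels : FreeMonoid (Fin 3) → FreeMonoid (Fin 3) → Prop
  | ab : mrels (.of 0 * .of 0 * .of 1) (.of 1 * (.of 0 * .of 0))
  | ba : mrels (.of 1 * .of 1 * .of 0) (.of 0 * (.of 1 * .of 1))
  | ac : mrels (.of 0 * .of 0 * .of 2) (.of 2 * (.of 0 * .of 0))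
  | bc : mrels (.of 1 * .of 1 * .of 2) (.of 2 * (.of 1 * .of 1))
  | c2 : mrels (.of 0 * .of 0 * (.of 1 * .of 1)) (.of 2 * .of 2)

/-- The positive monoid `B₂⁺(Σ_{1,0})` given by the presentation above. -/
abbrev M := PresentedMonoid mrels

def ma : M := PresentedMonoid.of mrels 0
def mb : M := PresentedMonoid.of mrels 1
def mc : M := PresentedMonoid.of mrels 2

/-- The natural projection from positive words to the universal Coxeter group `W(a,b,c)`. -/
def piW : FreeMonoid (Fin 3) →* W := FreeMonoid.lift fun i => (PresentedGroup.of i : W)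

namespace NFP

open List

abbrev St := ℕ × ℕ × List (Fin 3)

def step : St → Fin 3 → St
  | (k, l, []), x => (k, l, [x])
  | (k, l, y :: t), x =>
    if x = y then
      (k + (if x = 1 then 0 else 1), l + (if x = 0 then 0 else 1), t)
    else (k, l, x :: y :: t)

def Red (s : St) : Prop := s.2.2.Chain' (· ≠ ·)

lemma red_step (s : St) (x : Fin 3) (h : Red s) : Red (step s x) := by
  obtain ⟨k, l, (_ | ⟨y, t⟩)⟩ := s
  · simp [step, Red]; exact List.isChain_singleton x
  · by_cases hxy : x = y
    · simpa [step, hxy, Red, List.Chain'] using (List.isChain_cons.mp h).2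
    · have hst : step (k, l, y :: t) x = (k, l, x :: y :: t) := by simp [step, hxy]
      rw [hst]
      exact List.isChain_cons_cons.mpr ⟨hxy, h⟩

lemma red_foldl (u : List (Fin 3)) (s : St) (h : Red s) : Red (u.foldl step s) := by
  induction u generalizing s with
  | nil => exact h
  | cons x u ih => exact ih _ (red_step s x h)

lemma foldl_rel {u v : FreeMonoid (Fin 3)} (h : mrels u v) (s : St) (hs : Red s) :
    List.foldl step s u.toList = List.foldl step s v.toList := by
  obtain ⟨k, l, (_ | ⟨y, (_ | ⟨z, (_ | ⟨w, t⟩)⟩)⟩)⟩ := s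
  · cases h <;> simp [step]
  · cases h <;> fin_cases y <;> simp [step]
  · have hyz : y ≠ z := (List.isChain_cons_cons.mp hs).1
    cases h <;> fin_cases y <;> fin_cases z <;> simp_all [step]
  · have hyz : y ≠ z := (List.isChain_cons_cons.mp hs).1
    have hzw : z ≠ w := (List.isChain_cons_cons.mp (List.isChain_cons_cons.mp hs).2).1
    cases h <;> fin_cases y <;> fin_cases z <;> fin_cases w <;> simp_all [step]

lemma foldl_con {u v : FreeMonoid (Fin 3)} (h : conGen mrels u v) :
    ∀ s : St, Red s → List.foldl step s u.toList = List.foldl step s v.toList := by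
  induction h with
  | of x y hxy => exact foldl_rel hxy
  | refl => intro s _; rfl
  | symm _ ih => exact fun s hs => (ih s hs).symm
  | trans _ _ ih1 ih2 => exact fun s hs => (ih1 s hs).trans (ih2 s hs)
  | mul h1 h2 ih1 ih2 =>
    intro s hs
    simp only [FreeMonoid.toList_mul, List.foldl_append]
    rw [ih1 s hs, ih2 _ (red_foldl _ _ hs)]

def nf (u : FreeMonoid (Fin 3)) : St := u.toList.foldl step (0, 0, [])

lemma red_nil : Red ((0, 0, []) : St) := List.isChain_nil

def NF : M → St := Quotient.lift nf (fun _ _ h => foldl_con h (0, 0, []) red_nil)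

lemma NF_mk (u : FreeMonoid (Fin 3)) : NF (PresentedMonoid.mk mrels u) = nf u := rfl

lemma red_nf (u : FreeMonoid (Fin 3)) : (nf u).2.2.Chain' (· ≠ ·) :=
  red_foldl _ _ red_nil

lemma rel_mk {x y : FreeMonoid (Fin 3)} (h : mrels x y) :
    PresentedMonoid.mk mrels x = PresentedMonoid.mk mrels y :=
  Quot.sound (ConGen.Rel.of _ _ h)

lemma hab : ma * ma * mb = mb * (ma * ma) := rel_mk mrels.ab
lemma hba : mb * mb * ma = ma * (mb * mb) := rel_mk mrels.ba
lemma hac : ma * ma * mc = mc * (ma * ma) := rel_mk mrels.ac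
lemma hbc : mb * mb * mc = mc * (mb * mb) := rel_mk mrels.bc
lemma hc2 : ma * ma * (mb * mb) = mc * mc := rel_mk mrels.c2

lemma central_A : ∀ m : M, m * (ma * ma) = ma * ma * m := by
  intro m
  induction m using PresentedMonoid.inductionOn with
  | _ a =>
    induction a using FreeMonoid.inductionOn' with
    | one => simp
    | of_mul x xs ih =>
      have hx : (PresentedMonoid.of mrels x) * (ma * ma)
          = ma * ma * PresentedMonoid.of mrels x := by
        fin_cases x
        · show ma * (ma * ma) = ma * ma * ma; rw [mul_assoc]
        · show mb * (ma * ma) = ma * ma * mb; rw [hab]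
        · show mc * (ma * ma) = ma * ma * mc; rw [hac]
      have hsplit : PresentedMonoid.mk mrels (FreeMonoid.of x * xs)
          = PresentedMonoid.of mrels x * PresentedMonoid.mk mrels xs := rfl
      rw [hsplit, mul_assoc, ih, ← mul_assoc, hx, mul_assoc]

lemma central_B : ∀ m : M, m * (mb * mb) = mb * mb * m := by
  intro m
  induction m using PresentedMonoid.inductionOn with
  | _ a =>
    induction a using FreeMonoid.inductionOn' with
    | one => simp
    | of_mul x xs ih =>
      have hx : (PresentedMonoid.of mrels x) * (mb * mb)
          = mb * mb * PresentedMonoid.of mrels x := by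
        fin_cases x
        · show ma * (mb * mb) = mb * mb * ma; rw [hba]
        · show mb * (mb * mb) = mb * mb * mb; rw [mul_assoc]
        · show mc * (mb * mb) = mb * mb * mc; rw [hbc]
      have hsplit : PresentedMonoid.mk mrels (FreeMonoid.of x * xs)
          = PresentedMonoid.of mrels x * PresentedMonoid.mk mrels xs := rfl
      rw [hsplit, mul_assoc, ih, ← mul_assoc, hx, mul_assoc]

lemma key (P Q X Z1 Z2 : M) (h1 : ∀ m, m * Z1 = Z1 * m) (h2 : ∀ m, m * Z2 = Z2 * m) :
    P * Z1 * (Q * Z2) * X = P * Q * (X * (Z1 * Z2)) := by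
  simp only [mul_assoc]
  rw [← h2 X, ← h1 (Q * (X * Z2))]
  simp only [mul_assoc]
  rw [h1 Z2]

lemma powA (k : ℕ) : ma ^ (2 * (k + 1)) = ma ^ (2 * k) * (ma * ma) := by
  rw [Nat.mul_succ, pow_add, pow_two]

lemma powB (l : ℕ) : mb ^ (2 * (l + 1)) = mb ^ (2 * l) * (mb * mb) := by
  rw [Nat.mul_succ, pow_add, pow_two]

lemma mk_ofList_append (u v : List (Fin 3)) :
    PresentedMonoid.mk mrels (.ofList (u ++ v))
      = PresentedMonoid.mk mrels (.ofList u) * PresentedMonoid.mk mrels (.ofList v) := by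
  rw [FreeMonoid.ofList_append, map_mul]

def phiM (s : St) : M :=
  ma ^ (2 * s.1) * mb ^ (2 * s.2.1) * PresentedMonoid.mk mrels (.ofList s.2.2.reverse)

lemma mk_singleton (x : Fin 3) :
    PresentedMonoid.mk mrels (.ofList [x]) = PresentedMonoid.of mrels x := rfl

lemma mkA : PresentedMonoid.mk mrels (FreeMonoid.of (0 : Fin 3)) = ma := rfl
lemma mkB : PresentedMonoid.mk mrels (FreeMonoid.of (1 : Fin 3)) = mb := rfl
lemma mkC : PresentedMonoid.mk mrels (FreeMonoid.of (2 : Fin 3)) = mc := rfl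

lemma mk_of (x : Fin 3) :
    PresentedMonoid.mk mrels (FreeMonoid.of x) = PresentedMonoid.of mrels x := rfl

lemma ofA : PresentedMonoid.of mrels 0 = ma := rfl
lemma ofB : PresentedMonoid.of mrels 1 = mb := rfl
lemma ofC : PresentedMonoid.of mrels 2 = mc := rfl

lemma step_eq (s : St) (x : Fin 3) (hs : Red s) :
    phiM (step s x) = phiM s * PresentedMonoid.of mrels x := by
  obtain ⟨k, l, (_ | ⟨y, t⟩)⟩ := s
  · simp [step, phiM, mk_singleton, mk_of]
  · by_cases hxy : x = y
    · subst hxy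
      have hrev : ∀ x : Fin 3, PresentedMonoid.mk mrels (.ofList ((x :: t).reverse))
          = PresentedMonoid.mk mrels (.ofList t.reverse) * PresentedMonoid.of mrels x := by
        intro x
        rw [List.reverse_cons, mk_ofList_append, mk_singleton]
      fin_cases x
      · show phiM (k + 1, l, t) = phiM (k, l, (0 : Fin 3) :: t) * ma
        simp only [phiM, hrev (0 : Fin 3)]
        rw [powA]
        have := key (ma ^ (2 * k)) (mb ^ (2 * l))
          (PresentedMonoid.mk mrels (.ofList t.reverse)) (ma * ma) 1
          central_A (fun m => by simp)
        simp only [mul_one] at this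
        rw [this]
        simp [mul_assoc, ofA, ofB, ofC]
      · show phiM (k, l + 1, t) = phiM (k, l, (1 : Fin 3) :: t) * mb
        simp only [phiM, hrev (1 : Fin 3)]
        rw [powB]
        have := key (ma ^ (2 * k)) (mb ^ (2 * l))
          (PresentedMonoid.mk mrels (.ofList t.reverse)) 1 (mb * mb)
          (fun m => by simp) central_B
        simp only [one_mul, mul_one] at this
        rw [this]
        simp [mul_assoc, ofA, ofB, ofC]
      · show phiM (k + 1, l + 1, t) = phiM (k, l, (2 : Fin 3) :: t) * mc
        simp only [phiM, hrev (2 : Fin 3)]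
        rw [powA, powB]
        have := key (ma ^ (2 * k)) (mb ^ (2 * l))
          (PresentedMonoid.mk mrels (.ofList t.reverse)) (ma * ma) (mb * mb)
          central_A central_B
        rw [this, hc2]
        simp [mul_assoc, ofA, ofB, ofC]
    · have hstep : step (k, l, y :: t) x = (k, l, x :: y :: t) := by simp [step, hxy]
      rw [hstep]
      show phiM (k, l, x :: y :: t) = phiM (k, l, y :: t) * PresentedMonoid.of mrels x
      simp only [phiM]
      rw [List.reverse_cons, mk_ofList_append, mk_singleton, ← mul_assoc]

lemma existsE (u : List (Fin 3)) :
    PresentedMonoid.mk mrels (.ofList u) = phiM (u.foldl step (0, 0, [])) := by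
  induction u using List.reverseRecOn with
  | nil => simp [phiM]
  | append_singleton u x ih =>
    rw [List.foldl_append, List.foldl_cons, List.foldl_nil,
      step_eq _ x (red_foldl _ _ red_nil), ← ih, FreeMonoid.ofList_append, map_mul,
      mk_singleton]

/-! ### the W side -/

abbrev RL := { l : List (Fin 3) // l.Chain' (· ≠ ·) }

def tstep (x : Fin 3) : List (Fin 3) → List (Fin 3)
  | [] => [x]
  | y :: t => if x = y then t else x :: y :: t

lemma tstep_chain (x : Fin 3) {l : List (Fin 3)} (h : l.Chain' (· ≠ ·)) :
    (tstep x l).Chain' (· ≠ ·) := by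
  cases l with
  | nil => simp [tstep]; exact List.isChain_singleton x
  | cons y t =>
    by_cases hxy : x = y
    · simpa [tstep, hxy, List.Chain'] using (List.isChain_cons.mp h).2
    · have hst : tstep x (y :: t) = x :: y :: t := by simp [tstep, hxy]
      rw [hst]
      exact List.isChain_cons_cons.mpr ⟨hxy, h⟩

lemma tstep_tstep (x : Fin 3) {l : List (Fin 3)} (h : l.Chain' (· ≠ ·)) :
    tstep x (tstep x l) = l := by
  cases l with
  | nil => simp [tstep]
  | cons y t =>
    by_cases hxy : x = y
    · subst hxy
      cases t with
      | nil => simp [tstep]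
      | cons z t' =>
        have : x ≠ z := (List.isChain_cons_cons.mp h).1
        simp [tstep, this]
    · simp [tstep, hxy]

def sigma (x : Fin 3) : Equiv.Perm RL where
  toFun l := ⟨tstep x l.1, tstep_chain x l.2⟩
  invFun l := ⟨tstep x l.1, tstep_chain x l.2⟩
  left_inv l := Subtype.ext (tstep_tstep x l.2)
  right_inv l := Subtype.ext (tstep_tstep x l.2)

lemma sigma_sq (x : Fin 3) : sigma x * sigma x = 1 :=
  Equiv.ext fun l => Subtype.ext (tstep_tstep x l.2)

lemma wrels_lift : ∀ r ∈ wrels, FreeGroup.lift sigma r = 1 := by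
  intro r hr
  have key : ∀ x : Fin 3, FreeGroup.lift sigma (FreeGroup.of x ^ 2) = 1 := by
    intro x
    rw [map_pow, FreeGroup.lift_apply_of, sq, sigma_sq]
  simp only [wrels, Set.mem_insert_iff, Set.mem_singleton_iff] at hr
  rcases hr with rfl | rfl | rfl <;> exact key _

def phi : W →* Equiv.Perm RL := PresentedGroup.toGroup wrels_lift

lemma phi_of (x : Fin 3) : phi (PresentedGroup.of x) = sigma x :=
  PresentedGroup.toGroup.of _

lemma piW_of (x : Fin 3) : piW (FreeMonoid.of x) = PresentedGroup.of x :=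
  FreeMonoid.lift_eval_of _ x

lemma phi_apply : ∀ (u : List (Fin 3)) (l : RL),
    ((phi (piW (.ofList u))) l).1 = u.foldr tstep l.1 := by
  intro u
  induction u with
  | nil => intro l; simp
  | cons x u ih =>
    intro l
    rw [FreeMonoid.ofList_cons, map_mul, map_mul, piW_of, phi_of, Equiv.Perm.mul_apply]
    show tstep x ((phi (piW (.ofList u))) l).1 = _
    rw [ih l, List.foldr_cons]

lemma length_tstep (x : Fin 3) (l : List (Fin 3)) : (tstep x l).length ≤ l.length + 1 := by
  cases l with
  | nil => simp [tstep]
  | cons y t => by_cases hxy : x = y <;> simp [tstep, hxy] <;> omega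

lemma length_foldr : ∀ (u l : List (Fin 3)), (List.foldr tstep l u).length ≤ u.length + l.length := by
  intro u
  induction u with
  | nil => intro l; simp
  | cons x u ih =>
    intro l
    calc (List.foldr tstep l (x :: u)).length ≤ (List.foldr tstep l u).length + 1 :=
          length_tstep _ _
      _ ≤ u.length + l.length + 1 := by have := ih l; omega
      _ = (x :: u).length + l.length := by simp; omega

lemma foldr_reduced : ∀ u : List (Fin 3), u.Chain' (· ≠ ·) → List.foldr tstep [] u = u := by
  intro u
  induction u with
  | nil => intro _; rfl
  | cons x u ih =>
    intro h
    rw [List.foldr_cons, ih h.tail]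
    cases u with
    | nil => rfl
    | cons y t =>
      have : x ≠ y := (List.isChain_cons_cons.mp h).1
      simp [tstep, this]

lemma minimal_of_chain {r : List (Fin 3)} (hr : r.Chain' (· ≠ ·)) :
    ∀ u : FreeMonoid (Fin 3), piW u = piW (.ofList r) → r.length ≤ u.toList.length := by
  intro u h
  have h1 : ((phi (piW (.ofList u.toList))) ⟨[], List.isChain_nil⟩).1
      = ((phi (piW (.ofList r))) ⟨[], List.isChain_nil⟩).1 := by
    rw [FreeMonoid.ofList_toList, h]
  rw [phi_apply, phi_apply, foldr_reduced r hr] at h1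
  calc r.length = (u.toList.foldr tstep []).length := by rw [h1]
    _ ≤ u.toList.length + ([] : List (Fin 3)).length := length_foldr _ _
    _ = u.toList.length := by simp

lemma exists_dup : ∀ r : List (Fin 3), ¬ r.Chain' (· ≠ ·) → ∃ p x q, r = p ++ x :: x :: q
  | [], h => absurd List.isChain_nil h
  | [x], h => absurd (List.isChain_singleton x) h
  | x :: y :: t, h => by
    by_cases hxy : x = y
    · exact ⟨[], x, t, by rw [hxy, List.nil_append]⟩
    · obtain ⟨p, z, q, hp⟩ := exists_dup (y :: t) fun hc => h (List.isChain_cons_cons.mpr ⟨hxy, hc⟩)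
      exact ⟨x :: p, z, q, by rw [hp]; rfl⟩

lemma wsq (x : Fin 3) : (PresentedGroup.of x : W) * PresentedGroup.of x = 1 := by
  have hmem : (FreeGroup.of x ^ 2 : FreeGroup (Fin 3)) ∈ wrels := by
    fin_cases x <;> simp [wrels]
  have h1 : (PresentedGroup.mk wrels (FreeGroup.of x ^ 2)) = 1 :=
    (QuotientGroup.eq_one_iff _).mpr (Subgroup.subset_normalClosure hmem)
  rw [map_pow, sq] at h1
  exact h1

lemma chain_of_minimal {r : FreeMonoid (Fin 3)}
    (h : ∀ u : FreeMonoid (Fin 3), piW u = piW r → r.length ≤ u.length) :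
    r.toList.Chain' (· ≠ ·) := by
  by_contra hc
  obtain ⟨p, x, q, hp⟩ := exists_dup r.toList hc
  have hpi : piW (.ofList (p ++ q)) = piW r := by
    conv_rhs => rw [← FreeMonoid.ofList_toList r, hp]
    calc piW (.ofList (p ++ q)) = piW (.ofList p) * piW (.ofList q) := by
          rw [FreeMonoid.ofList_append, map_mul]
      _ = piW (.ofList p) * ((PresentedGroup.of x * PresentedGroup.of x) * piW (.ofList q)) := by
          rw [wsq, one_mul]
      _ = piW (.ofList (p ++ x :: x :: q)) := by
          rw [show p ++ x :: x :: q = p ++ ([x] ++ ([x] ++ q)) from by simp]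
          simp only [FreeMonoid.ofList_append, map_mul, FreeMonoid.ofList_singleton, piW_of]
          simp [mul_assoc]
  have hle := h _ hpi
  have : r.length = r.toList.length := rfl
  have hlen : r.toList.length = p.length + q.length + 2 := by simp [hp]; omega
  have : FreeMonoid.length (FreeMonoid.ofList (p ++ q)) = p.length + q.length := by
    show (p ++ q).length = _
    simp
  omega

/-! ### computation of NF on normal-form words -/

lemma fold_rep0 : ∀ (n k l : ℕ),
    (List.replicate (2 * n) (0 : Fin 3)).foldl step (k, l, []) = (k + n, l, []) := by
  intro n
  induction n with
  | zero => intro k l; simp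
  | succ n ih =>
    intro k l
    rw [Nat.mul_succ, show 2 * n + 2 = (2 * n + 1) + 1 from rfl]
    rw [show ((2 * n + 1) + 1) = ((2*n)+1)+1 from rfl]
    rw [show List.replicate ((2*n)+1+1) (0 : Fin 3)
        = (0 : Fin 3) :: (0 : Fin 3) :: List.replicate (2*n) 0 from rfl]
    rw [List.foldl_cons, List.foldl_cons]
    have h1 : step ((k, l, []) : St) 0 = (k, l, [0]) := rfl
    have h2 : step ((k, l, [0]) : St) 0 = (k + 1, l, []) := by simp [step]
    rw [h1, h2, ih]
    simp [Nat.add_assoc, Nat.add_comm 1 n]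

lemma fold_rep1 : ∀ (n k l : ℕ),
    (List.replicate (2 * n) (1 : Fin 3)).foldl step (k, l, []) = (k, l + n, []) := by
  intro n
  induction n with
  | zero => intro k l; simp
  | succ n ih =>
    intro k l
    rw [Nat.mul_succ]
    rw [show List.replicate ((2*n)+2) (1 : Fin 3)
        = (1 : Fin 3) :: (1 : Fin 3) :: List.replicate (2*n) 1 from rfl]
    rw [List.foldl_cons, List.foldl_cons]
    have h1 : step ((k, l, []) : St) 1 = (k, l, [1]) := rfl
    have h2 : step ((k, l, [1]) : St) 1 = (k, l + 1, []) := by simp [step]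
    rw [h1, h2, ih]
    simp [Nat.add_assoc, Nat.add_comm 1 n]

lemma fold_red : ∀ (r t : List (Fin 3)) (k l : ℕ),
    (r.reverse ++ t).Chain' (· ≠ ·) → r.foldl step (k, l, t) = (k, l, r.reverse ++ t) := by
  intro r
  induction r with
  | nil => intro t k l _; simp
  | cons x r' ih =>
    intro t k l h
    have hEq : (x :: r').reverse ++ t = r'.reverse ++ (x :: t) := by
      rw [List.reverse_cons, List.append_assoc]; rfl
    rw [hEq] at h
    have hstep : step ((k, l, t) : St) x = (k, l, x :: t) := by
      cases t with
      | nil => rfl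
      | cons y t' =>
        have hx : x ≠ y := by
          have h3 := (List.isChain_append.mp (by
            rw [show r'.reverse ++ (x :: y :: t') = (r'.reverse ++ [x]) ++ (y :: t') from by
              rw [List.append_assoc]; rfl] at h; exact h)).2.2
          exact h3 x (by rw [List.getLast?_concat]; rfl) y rfl
        simp [step, hx]
    rw [List.foldl_cons, hstep, ih (x :: t) k l h, hEq]

lemma pow_of (x : Fin 3) (n : ℕ) :
    (PresentedMonoid.of mrels x) ^ n = PresentedMonoid.mk mrels (.ofList (List.replicate n x)) := by
  induction n with
  | zero => simp
  | succ n ih =>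
    rw [pow_succ', ih, List.replicate_succ, FreeMonoid.ofList_cons, map_mul]
    rfl

lemma chain_rev {l : List (Fin 3)} (h : l.Chain' (· ≠ ·)) : l.reverse.Chain' (· ≠ ·) := by
  change List.IsChain _ l.reverse
  rw [List.isChain_reverse]
  exact h.imp fun _ _ h' => h'.symm

lemma NF_of_form (k l : ℕ) (r : List (Fin 3)) (hr : r.Chain' (· ≠ ·)) :
    NF (ma ^ (2 * k) * mb ^ (2 * l) * PresentedMonoid.mk mrels (.ofList r))
      = (k, l, r.reverse) := by
  have : ma ^ (2 * k) * mb ^ (2 * l) * PresentedMonoid.mk mrels (.ofList r)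
      = PresentedMonoid.mk mrels
          (.ofList (List.replicate (2 * k) 0 ++ (List.replicate (2 * l) 1 ++ r))) := by
    rw [show ma = PresentedMonoid.of mrels 0 from rfl, show mb = PresentedMonoid.of mrels 1 from rfl,
      pow_of, pow_of]
    simp only [FreeMonoid.ofList_append, map_mul, mul_assoc]
  rw [this, NF_mk]
  show (List.replicate (2 * k) (0:Fin 3) ++ (List.replicate (2 * l) (1:Fin 3) ++ r)).foldl
      step (0, 0, []) = (k, l, r.reverse)
  rw [List.foldl_append, List.foldl_append, fold_rep0, fold_rep1]
  simp only [Nat.zero_add]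
  rw [fold_red r [] k l (by simpa using chain_rev hr)]
  simp

end NFP


open NFP in
theorem stmt_18 (g : M) :
    ∃! x : ℕ × ℕ × FreeMonoid (Fin 3),
      (∀ u : FreeMonoid (Fin 3), piW u = piW x.2.2 → x.2.2.length ≤ u.length) ∧
      g = ma ^ (2 * x.1) * mb ^ (2 * x.2.1) * PresentedMonoid.mk mrels x.2.2 := by
  obtain ⟨u, rfl⟩ := PresentedMonoid.surjective_mk (rels := mrels) g
  refine ⟨((nf u).1, (nf u).2.1, FreeMonoid.ofList (nf u).2.2.reverse), ⟨?_, ?_⟩, ?_⟩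
  · intro u' h'
    exact minimal_of_chain (chain_rev (red_nf u)) u' h'
  · have := existsE u.toList
    rw [FreeMonoid.ofList_toList] at this
    exact this
  · rintro ⟨k', l', r'⟩ ⟨hmin, heq⟩
    have hc : r'.toList.Chain' (· ≠ ·) := chain_of_minimal hmin
    have h2 : NF (PresentedMonoid.mk mrels u) = (k', l', r'.toList.reverse) := by
      rw [heq, show PresentedMonoid.mk mrels r' =
        PresentedMonoid.mk mrels (.ofList r'.toList) from by rw [FreeMonoid.ofList_toList]]
      exact NF_of_form k' l' r'.toList hc
    have h1 : NF (PresentedMonoid.mk mrels u) = ((nf u).1, (nf u).2.1, (nf u).2.2) := rfl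
    rw [h1] at h2
    have e1 : (nf u).1 = k' := congrArg Prod.fst h2
    have e2 : (nf u).2.1 = l' := congrArg (fun p => p.2.1) h2
    have e3 : (nf u).2.2 = r'.toList.reverse := congrArg (fun p => p.2.2) h2
    have e4 : FreeMonoid.ofList (nf u).2.2.reverse = r' := by
      rw [e3, List.reverse_reverse, FreeMonoid.ofList_toList]
    simp only [Prod.mk.injEq]
    exact ⟨e1.symm, e2.symm, e4.symm⟩
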